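/- arXiv:2010.12365 — 5 statements merged into one kernel-verified Lean document; each statement's English description precedes it below -/
import Mathlib

section
/- Let E be a finite-dimensional real inner product space, let a^1,…,a^m ∈ E be a finite family of generators, let A_c = co{a^1,…,a^m} be their convex hull and K(A) = {∑_{i=1}^m u_i a^i : u_i ≥ 0} their conical hull. Let b ∈ E and ρ > 0. Suppose b^ρ ∈ ρA_c satisfies ‖b^ρ − b‖ ≤ ‖x − b‖ for all x ∈ ρA_c, suppose b^K ∈ K(A) satisfies ‖b^K − b‖ ≤ ‖x − b‖ for all x ∈ K(A), and suppose b^{co} ∈ co({0} ∪ ρA_c) satisfies ‖b^{co} − b‖ ≤ ‖x − b‖ for all x ∈ co({0} ∪ ρA_c). If ‖b^ρ‖² > ⟨b, b^ρ⟩, then b^K = b^{co}. -/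
open scoped RealInnerProductSpace Pointwise

/-- Variational inequality characterizing a minimizer of distance over a convex set. -/
private lemma vi_of_min {E : Type*} [NormedAddCommGroup E] [InnerProductSpace ℝ E]
    {S : Set E} (hS : Convex ℝ S) {b v : E} (hv : v ∈ S)
    (hmin : ∀ x ∈ S, ‖v - b‖ ≤ ‖x - b‖) :
    ∀ z ∈ S, ⟪b - v, z - v⟫ ≤ 0 := by
  have h1 : ‖b - v‖ = ⨅ w : S, ‖b - w‖ := by
    haveI : Nonempty S := ⟨⟨v, hv⟩⟩
    apply le_antisymm
    · exact le_ciInf fun w => by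
        rw [norm_sub_rev b v, norm_sub_rev b (w : E)]; exact hmin w w.2
    · have hbdd : BddBelow (Set.range fun w : S => ‖b - (w : E)‖) := by
        refine ⟨0, ?_⟩
        rintro r ⟨w, rfl⟩
        exact norm_nonneg _
      exact ciInf_le hbdd ⟨v, hv⟩
  exact (norm_eq_iInf_iff_real_inner_le_zero hS hv).mp h1

/-- Uniqueness of the minimizer of distance over a convex set. -/
private lemma min_unique {E : Type*} [NormedAddCommGroup E] [InnerProductSpace ℝ E]
    {S : Set E} (hS : Convex ℝ S) {b v w : E} (hv : v ∈ S) (hw : w ∈ S)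
    (hvm : ∀ x ∈ S, ‖v - b‖ ≤ ‖x - b‖) (hwm : ∀ x ∈ S, ‖w - b‖ ≤ ‖x - b‖) :
    v = w := by
  have h1 := vi_of_min hS hv hvm w hw
  have h2 := vi_of_min hS hw hwm v hv
  have key : ⟪w - v, w - v⟫ ≤ 0 := by
    have e : ⟪w - v, w - v⟫ = ⟪b - v, w - v⟫ + ⟪b - w, v - w⟫ := by
      simp only [inner_sub_left, inner_sub_right]
      linarith [real_inner_comm b v, real_inner_comm b w, real_inner_comm v w]
    linarith
  have hz : ‖w - v‖ = 0 := by
    have h3 := real_inner_self_eq_norm_sq (w - v)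
    nlinarith [norm_nonneg (w - v)]
  have := norm_eq_zero.mp hz
  exact (sub_eq_zero.mp this).symm

/-- Theorem 1 of the paper: if the projection `bρ` of `b` onto the scaled polytope
`ρ • Ac` satisfies `‖bρ‖² > ⟪b, bρ⟫`, then the projection of `b` onto the cone `K(A)`
coincides with the projection of `b` onto the truncated cone `co({0} ∪ ρ • Ac)`. -/
theorem cone_truncation_equiv
    {E : Type*} [NormedAddCommGroup E] [InnerProductSpace ℝ E] [FiniteDimensional ℝ E]
    {m : ℕ} (a : Fin m → E)
    (Ac : Set E) (hAc : Ac = convexHull ℝ (Set.range a))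
    (K : Set E)
    (hK : K = {x : E | ∃ u : Fin m → ℝ, (∀ i, 0 ≤ u i) ∧ x = ∑ i, u i • a i})
    (b : E) (ρ : ℝ) (hρ : 0 < ρ)
    (bρ : E) (hbρ_mem : bρ ∈ ρ • Ac)
    (hbρ_min : ∀ x ∈ ρ • Ac, ‖bρ - b‖ ≤ ‖x - b‖)
    (bK : E) (hbK_mem : bK ∈ K)
    (hbK_min : ∀ x ∈ K, ‖bK - b‖ ≤ ‖x - b‖)
    (bco : E) (hbco_mem : bco ∈ convexHull ℝ ({(0 : E)} ∪ ρ • Ac))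
    (hbco_min : ∀ x ∈ convexHull ℝ ({(0 : E)} ∪ ρ • Ac), ‖bco - b‖ ≤ ‖x - b‖)
    (hcond : ‖bρ‖ ^ 2 > ⟪b, bρ⟫) :
    bK = bco := by
  set T : Set E := convexHull ℝ ({(0 : E)} ∪ ρ • Ac) with hT
  have hAcConv : Convex ℝ Ac := hAc ▸ convex_convexHull ℝ _
  have hρAcConv : Convex ℝ (ρ • Ac) := hAcConv.smul ρ
  have hTconv : Convex ℝ T := convex_convexHull ℝ _
  have hρAcT : ρ • Ac ⊆ T := Set.subset_union_right.trans (subset_convexHull ℝ _)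
  have h0T : (0 : E) ∈ T := subset_convexHull ℝ _ (Set.mem_union_left _ rfl)
  -- K is convex
  have hKconv : Convex ℝ K := by
    rw [hK]
    rintro x ⟨u, hu, rfl⟩ y ⟨v, hv, rfl⟩ α β hα hβ hαβ
    refine ⟨fun i => α * u i + β * v i, fun i => add_nonneg (mul_nonneg hα (hu i)) (mul_nonneg hβ (hv i)), ?_⟩
    rw [Finset.smul_sum, Finset.smul_sum, ← Finset.sum_add_distrib]
    exact Finset.sum_congr rfl fun i _ => by rw [smul_smul, smul_smul, add_smul]
  -- the generators lie in K
  have hrange : Set.range a ⊆ K := by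
    rintro _ ⟨i, rfl⟩
    rw [hK]
    refine ⟨fun j => if j = i then 1 else 0, fun j => by by_cases h : j = i <;> simp [h], ?_⟩
    simp [ite_smul]
  have hAcK : Ac ⊆ K := by rw [hAc]; exact convexHull_min hrange hKconv
  have hsmulK : ∀ c : ℝ, 0 ≤ c → ∀ x ∈ K, c • x ∈ K := by
    intro c hc x hx
    rw [hK] at hx ⊢
    obtain ⟨u, hu, rfl⟩ := hx
    refine ⟨fun i => c * u i, fun i => mul_nonneg hc (hu i), ?_⟩
    rw [Finset.smul_sum]
    exact Finset.sum_congr rfl fun i _ => by simp [smul_smul]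
  have h0K : (0 : E) ∈ K := by
    rw [hK]; exact ⟨fun _ => 0, fun _ => le_refl 0, by simp⟩
  have hρAcK : ρ • Ac ⊆ K := by
    rintro _ ⟨x, hx, rfl⟩
    exact hsmulK ρ hρ.le x (hAcK hx)
  have hTK : T ⊆ K :=
    convexHull_min (Set.union_subset (by simpa using h0K) hρAcK) hKconv
  -- variational inequality for bco on T
  have hvi : ∀ z ∈ T, ⟪b - bco, z - bco⟫ ≤ 0 := vi_of_min hTconv hbco_mem hbco_min
  have h0 : 0 ≤ ⟪b - bco, bco⟫ := by
    have := hvi 0 h0T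
    rw [zero_sub, inner_neg_right] at this
    linarith
  -- Step A : ⟪b - bco, bco⟫ ≤ 0
  have hA : ⟪b - bco, bco⟫ ≤ 0 := by
    by_contra hcon
    push_neg at hcon
    -- structure of T : bco = q • z with z ∈ ρ • Ac, q ∈ [0,1]
    have hmem : bco ∈ convexJoin ℝ {(0 : E)} (convexHull ℝ (ρ • Ac)) := by
      have : ({(0 : E)} ∪ ρ • Ac) = insert (0 : E) (ρ • Ac) := by
        rw [Set.insert_eq]
      rw [hT, this, convexHull_insert ⟨bρ, hbρ_mem⟩] at hbco_mem
      exact hbco_mem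
    rw [hρAcConv.convexHull_eq] at hmem
    obtain ⟨x0, hx0, z, hz, hseg⟩ := mem_convexJoin.mp hmem
    rw [Set.mem_singleton_iff] at hx0
    subst hx0
    obtain ⟨p, q, hp, hq, hpq, hbe⟩ := hseg
    rw [smul_zero, zero_add] at hbe
    -- so bco = q • z
    have hbco_ne : bco ≠ 0 := by
      intro h
      rw [h, inner_zero_right] at hcon
      exact lt_irrefl 0 hcon
    have hqpos : 0 < q := by
      rcases lt_or_eq_of_le hq with h' | h'
      · exact h'
      · exfalso; apply hbco_ne; rw [← hbe, ← h', zero_smul]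
    have hq1 : q ≤ 1 := by linarith
    rcases lt_or_eq_of_le hq1 with hqlt | hqeq
    · -- q < 1 : move outward to contradict minimality
      have hnpos : 0 < ‖bco‖ := norm_pos_iff.mpr hbco_ne
      set h : ℝ := ⟪b - bco, bco⟫ with hh
      set δ : ℝ := min (h / ‖bco‖ ^ 2) ((1 - q) / q) with hδ
      have hδpos : 0 < δ := by
        apply lt_min
        · positivity
        · apply div_pos (by linarith) hqpos
      have hδ1 : δ * ‖bco‖ ^ 2 ≤ h := by
        have := min_le_left (h / ‖bco‖ ^ 2) ((1 - q) / q)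
        rw [← hδ] at this
        calc δ * ‖bco‖ ^ 2 ≤ (h / ‖bco‖ ^ 2) * ‖bco‖ ^ 2 := by
              apply mul_le_mul_of_nonneg_right this (by positivity)
          _ = h := by field_simp
      have hδ2 : (1 + δ) * q ≤ 1 := by
        have := min_le_right (h / ‖bco‖ ^ 2) ((1 - q) / q)
        rw [← hδ] at this
        have : δ * q ≤ 1 - q := by
          calc δ * q ≤ ((1 - q) / q) * q := mul_le_mul_of_nonneg_right this hqpos.le
            _ = 1 - q := by field_simp
        nlinarith
      -- the point w = (1+δ) • bco ∈ T
      set w : E := (1 + δ) • bco with hw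
      have hwT : w ∈ T := by
        have hseg' : w ∈ segment ℝ (0 : E) z := by
          refine ⟨1 - (1 + δ) * q, (1 + δ) * q, by linarith, by positivity, by ring, ?_⟩
          rw [smul_zero, zero_add, hw, ← hbe, smul_smul]
        exact hTconv.segment_subset h0T (hρAcT hz) hseg'
      have hle := hbco_min w hwT
      -- compute ‖w - b‖² and derive contradiction
      have hexp : ‖w - b‖ ^ 2 = ‖bco - b‖ ^ 2 - 2 * δ * h + δ ^ 2 * ‖bco‖ ^ 2 := by
        have : w - b = (bco - b) + δ • bco := by
          rw [hw]; module
        rw [this, norm_add_sq_real, real_inner_smul_right, norm_smul]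
        have : ⟪bco - b, bco⟫ = -h := by
          rw [hh]
          simp only [inner_sub_left]
          ring
        rw [this]
        simp [mul_pow, abs_of_pos hδpos]
        ring
      have hlt : ‖w - b‖ ^ 2 < ‖bco - b‖ ^ 2 := by
        rw [hexp]
        nlinarith
      have : ‖w - b‖ < ‖bco - b‖ := by
        apply lt_of_pow_lt_pow_left₀ 2 (norm_nonneg _) hlt
      linarith
    · -- q = 1 : bco ∈ ρ • Ac, so bco = bρ, contradicting hcond
      have hbcoρ : bco ∈ ρ • Ac := by
        rw [← hbe, hqeq, one_smul]; exact hz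
      have hbco_minρ : ∀ x ∈ ρ • Ac, ‖bco - b‖ ≤ ‖x - b‖ := fun x hx =>
        hbco_min x (hρAcT hx)
      have heq : bρ = bco := min_unique hρAcConv hbρ_mem hbcoρ hbρ_min hbco_minρ
      rw [← heq] at hcon
      rw [inner_sub_left, real_inner_self_eq_norm_sq] at hcon
      linarith
  have hB0 : ⟪b - bco, bco⟫ = 0 := le_antisymm hA h0
  -- Step B : ⟪b - bco, x⟫ ≤ 0 for all x ∈ K
  have hBK : ∀ x ∈ K, ⟪b - bco, x⟫ ≤ 0 := by
    intro x hx
    rw [hK] at hx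
    obtain ⟨u, hu, rfl⟩ := hx
    set lam : ℝ := ∑ i, u i with hlam
    have hlam0 : 0 ≤ lam := Finset.sum_nonneg fun i _ => hu i
    rcases eq_or_lt_of_le hlam0 with hl | hl
    · -- all u i = 0
      have : ∀ i ∈ Finset.univ, u i = 0 :=
        (Finset.sum_eq_zero_iff_of_nonneg fun i _ => hu i).mp hl.symm
      have hx0 : ∑ i, u i • a i = 0 :=
        Finset.sum_eq_zero fun i hi => by rw [this i hi, zero_smul]
      rw [hx0, inner_zero_right]
    · -- lam > 0
      set y : E := ∑ i, (u i / lam) • a i with hy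
      have hyAc : y ∈ Ac := by
        rw [hAc, hy]
        refine (convex_convexHull ℝ (Set.range a)).sum_mem
          (fun i _ => div_nonneg (hu i) hlam0) ?_
          (fun i _ => subset_convexHull ℝ _ ⟨i, rfl⟩)
        rw [← Finset.sum_div, ← hlam, div_self hl.ne']
      have hρyT : ρ • y ∈ T := hρAcT ⟨y, hyAc, rfl⟩
      have h1 := hvi (ρ • y) hρyT
      rw [inner_sub_right, hB0, sub_zero, real_inner_smul_right] at h1
      have hyle : ⟪b - bco, y⟫ ≤ 0 := nonpos_of_mul_nonpos_right h1 hρ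
      have hxy : ∑ i, u i • a i = lam • y := by
        rw [hy, Finset.smul_sum]
        refine Finset.sum_congr rfl fun i _ => ?_
        rw [smul_smul, mul_div_cancel₀ (u i) hl.ne']
      rw [hxy, real_inner_smul_right]
      exact mul_nonpos_of_nonneg_of_nonpos hlam0 hyle
  -- bco minimizes distance over K
  have hbcoK : bco ∈ K := hTK hbco_mem
  have hbco_minK : ∀ x ∈ K, ‖bco - b‖ ≤ ‖x - b‖ := by
    intro x hx
    have hVI : ⟪b - bco, x - bco⟫ ≤ 0 := by
      rw [inner_sub_right, hB0, sub_zero]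
      exact hBK x hx
    have hexp : ‖x - b‖ ^ 2 = ‖x - bco‖ ^ 2 - 2 * ⟪b - bco, x - bco⟫ + ‖bco - b‖ ^ 2 := by
      have h1 : x - b = (x - bco) + (bco - b) := by abel
      rw [h1, norm_add_sq_real]
      have h2 : ⟪x - bco, bco - b⟫ = -⟪b - bco, x - bco⟫ := by
        rw [real_inner_comm]
        simp only [inner_sub_left, inner_sub_right]
        ring
      rw [h2]; ring
    have hsq : ‖bco - b‖ ^ 2 ≤ ‖x - b‖ ^ 2 := by
      rw [hexp]; nlinarith [sq_nonneg ‖x - bco‖]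
    exact (pow_le_pow_iff_left₀ (norm_nonneg _) (norm_nonneg _) (by norm_num)).mp hsq
  exact min_unique hKconv hbK_mem hbcoK hbK_min hbco_minK
end

section
/- Let E be a finite-dimensional real inner product space, let a^1,…,a^m ∈ E be a finite family of generators with convex hull A_c = co{a^1,…,a^m}, and assume 0 ∉ A_c. Let a^{co} ∈ A_c satisfy ‖a^{co}‖ ≤ ‖x‖ for all x ∈ A_c, and set d_A = ‖a^{co}‖ (so d_A > 0). Let b ∈ E and let ρ > ‖b‖/d_A. If b^ρ ∈ ρA_c satisfies ‖b^ρ − b‖ ≤ ‖x − b‖ for all x ∈ ρA_c, then ‖b^ρ‖ > ‖b‖ and ‖b^ρ‖² > ⟨b, b^ρ⟩. -/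
open scoped RealInnerProductSpace Pointwise

/-- If the cone is pointed (`0 ∉ Ac`) and `ρ > ‖b‖ / d_A` where `d_A` is the least norm
over the polytope `Ac`, then the projection `bρ` of `b` onto `ρ • Ac` satisfies
`‖bρ‖ > ‖b‖` and `‖bρ‖² > ⟪b, bρ⟫`, i.e. the hypothesis of Theorem 1 holds. -/
theorem rho_min_implies_condition
    {E : Type*} [NormedAddCommGroup E] [InnerProductSpace ℝ E] [FiniteDimensional ℝ E]
    {m : ℕ} (a : Fin m → E)
    (Ac : Set E) (hAc : Ac = convexHull ℝ (Set.range a))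
    (hpointed : (0 : E) ∉ Ac)
    (aco : E) (haco_mem : aco ∈ Ac)
    (haco_min : ∀ x ∈ Ac, ‖aco‖ ≤ ‖x‖)
    (dA : ℝ) (hdA : dA = ‖aco‖)
    (b : E) (ρ : ℝ) (hρ : ρ > ‖b‖ / dA)
    (bρ : E) (hbρ_mem : bρ ∈ ρ • Ac)
    (hbρ_min : ∀ x ∈ ρ • Ac, ‖bρ - b‖ ≤ ‖x - b‖) :
    ‖bρ‖ > ‖b‖ ∧ ‖bρ‖ ^ 2 > ⟪b, bρ⟫ := by
  have hdApos : 0 < dA := by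
    rw [hdA, norm_pos_iff]
    intro h
    exact hpointed (h ▸ haco_mem)
  have hρpos : 0 < ρ := lt_of_le_of_lt (div_nonneg (norm_nonneg b) hdApos.le) hρ
  obtain ⟨x, hx, rfl⟩ := hbρ_mem
  have hx1 : dA ≤ ‖x‖ := hdA ▸ haco_min x hx
  have hnorm : ‖b‖ < ‖ρ • x‖ := by
    rw [norm_smul, Real.norm_eq_abs, abs_of_pos hρpos]
    calc ‖b‖ < ρ * dA := (div_lt_iff₀ hdApos).mp hρ
    _ ≤ ρ * ‖x‖ := by nlinarith
  refine ⟨hnorm, ?_⟩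
  have h2 := real_inner_le_norm b (ρ • x)
  have hpos : 0 < ‖ρ • x‖ := lt_of_le_of_lt (norm_nonneg b) hnorm
  nlinarith
end

section
/- Let E be a finite-dimensional real inner product space, let a^1,…,a^m ∈ E be a finite family of generators with convex hull A_c = co{a^1,…,a^m} and conical hull K(A) = {∑_{i=1}^m u_i a^i : u_i ≥ 0}, and assume 0 ∉ A_c. Let a^{co} ∈ A_c satisfy ‖a^{co}‖ ≤ ‖x‖ for all x ∈ A_c and set d_A = ‖a^{co}‖. Let b ∈ E, let ρ > ‖b‖/d_A, suppose b^K ∈ K(A) satisfies ‖b^K − b‖ ≤ ‖x − b‖ for all x ∈ K(A), and suppose b^{co} ∈ co({0} ∪ ρA_c) satisfies ‖b^{co} − b‖ ≤ ‖x − b‖ for all x ∈ co({0} ∪ ρA_c). Then b^K = b^{co}. -/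
open scoped RealInnerProductSpace Pointwise

/-- Direct demonstration: if the cone is pointed (`0 ∉ Ac`) and `ρ > ‖b‖ / d_A`,
then the projection of `b` onto the cone `K(A)` coincides with the projection of `b`
onto the truncated cone `co({0} ∪ ρ • Ac)`. -/
theorem rho_min_cone_truncation_equiv
    {E : Type*} [NormedAddCommGroup E] [InnerProductSpace ℝ E] [FiniteDimensional ℝ E]
    {m : ℕ} (a : Fin m → E)
    (Ac : Set E) (hAc : Ac = convexHull ℝ (Set.range a))
    (K : Set E)
    (hK : K = {x : E | ∃ u : Fin m → ℝ, (∀ i, 0 ≤ u i) ∧ x = ∑ i, u i • a i})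
    (hpointed : (0 : E) ∉ Ac)
    (aco : E) (haco_mem : aco ∈ Ac)
    (haco_min : ∀ x ∈ Ac, ‖aco‖ ≤ ‖x‖)
    (dA : ℝ) (hdA : dA = ‖aco‖)
    (b : E) (ρ : ℝ) (hρ : ρ > ‖b‖ / dA)
    (bK : E) (hbK_mem : bK ∈ K)
    (hbK_min : ∀ x ∈ K, ‖bK - b‖ ≤ ‖x - b‖)
    (bco : E) (hbco_mem : bco ∈ convexHull ℝ ({(0 : E)} ∪ ρ • Ac))
    (hbco_min : ∀ x ∈ convexHull ℝ ({(0 : E)} ∪ ρ • Ac), ‖bco - b‖ ≤ ‖x - b‖) :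
    bK = bco := by
  set T := convexHull ℝ ({(0 : E)} ∪ ρ • Ac) with hT
  have hdA_pos : 0 < dA := by
    rw [hdA, norm_pos_iff]
    intro h
    exact hpointed (h ▸ haco_mem)
  have hb_lt : ‖b‖ < ρ * dA := by
    have := (div_lt_iff₀ hdA_pos).mp hρ
    linarith
  have hρpos : 0 < ρ := lt_of_le_of_lt (div_nonneg (norm_nonneg b) hdA_pos.le) hρ
  -- K is convex
  have hKconv : Convex ℝ K := by
    rw [hK]
    rintro x ⟨u, hu, rfl⟩ y ⟨v, hv, rfl⟩ p q hp hq hpq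
    refine ⟨fun i => p * u i + q * v i, fun i => add_nonneg (mul_nonneg hp (hu i)) (mul_nonneg hq (hv i)), ?_⟩
    simp only [add_smul, mul_smul, Finset.sum_add_distrib, Finset.smul_sum]
  have h0K : (0 : E) ∈ K := by
    rw [hK]; exact ⟨0, fun i => le_rfl, by simp⟩
  have hAcK : Ac ⊆ K := by
    rw [hAc]
    refine convexHull_min ?_ hKconv
    rintro z ⟨i, rfl⟩
    rw [hK]
    refine ⟨fun j => if j = i then 1 else 0, fun j => by positivity, ?_⟩
    simp
  have hTsubK : T ⊆ K := by
    refine convexHull_min ?_ hKconv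
    rintro x (rfl | ⟨y, hy, rfl⟩)
    · exact h0K
    · have hyK := hAcK hy
      rw [hK] at hyK ⊢
      obtain ⟨u, hu, rfl⟩ := hyK
      refine ⟨fun i => ρ * u i, fun i => mul_nonneg hρpos.le (hu i), ?_⟩
      simp [Finset.smul_sum, mul_smul]
  -- representation of bK
  rw [hK] at hbK_mem
  obtain ⟨u, hu, hbKeq⟩ := hbK_mem
  have hscale : ∀ t : ℝ, 0 ≤ t → t • bK ∈ K := by
    intro t ht
    rw [hK]
    refine ⟨fun i => t * u i, fun i => mul_nonneg ht (hu i), ?_⟩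
    rw [hbKeq]
    simp [Finset.smul_sum, mul_smul]
  -- expansion of the quadratic
  have hexp : ∀ t : ℝ, ‖t • bK - b‖ ^ 2 = t ^ 2 * ‖bK‖ ^ 2 - 2 * t * ⟪bK, b⟫ + ‖b‖ ^ 2 := by
    intro t
    rw [← real_inner_self_eq_norm_sq, ← real_inner_self_eq_norm_sq, ← real_inner_self_eq_norm_sq]
    simp only [inner_sub_left, inner_sub_right, real_inner_smul_left, real_inner_smul_right,
      real_inner_comm b bK]
    ring
  have hf : ∀ t : ℝ, 0 ≤ t → ‖bK - b‖ ^ 2 ≤ ‖t • bK - b‖ ^ 2 := fun t ht =>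
    pow_le_pow_left₀ (norm_nonneg _) (hbK_min _ (hscale t ht)) 2
  have hf1 : ‖bK - b‖ ^ 2 = 1 ^ 2 * ‖bK‖ ^ 2 - 2 * 1 * ⟪bK, b⟫ + ‖b‖ ^ 2 := by
    rw [← hexp 1, one_smul]
  -- ‖bK‖ ≤ ‖b‖
  have hbK_le : ‖bK‖ ≤ ‖b‖ := by
    by_cases h0 : bK = 0
    · simp [h0, norm_nonneg]
    · have hα : (0:ℝ) < ‖bK‖ ^ 2 := by
        have := norm_pos_iff.mpr h0
        positivity
      have key : ‖bK‖ ^ 2 ≤ ⟪bK, b⟫ := by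
        by_cases hβ : 0 ≤ ⟪bK, b⟫
        · have h := hf (⟪bK, b⟫ / ‖bK‖ ^ 2) (div_nonneg hβ hα.le)
          rw [hexp, hf1] at h
          have h2 : (⟪bK, b⟫ / ‖bK‖ ^ 2) * ‖bK‖ ^ 2 = ⟪bK, b⟫ := by
            field_simp
          nlinarith [sq_nonneg (‖bK‖ ^ 2 - ⟪bK, b⟫)]
        · have h := hf 0 le_rfl
          rw [hexp, hf1] at h
          nlinarith
      have hcs := real_inner_le_norm bK b
      nlinarith [norm_pos_iff.mpr h0]
  -- bK ∈ T
  have hbKT : bK ∈ T := by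
    set s := ∑ i, u i with hs
    have hs0 : 0 ≤ s := Finset.sum_nonneg fun i _ => hu i
    rcases eq_or_lt_of_le hs0 with hseq | hspos
    · have : ∀ i ∈ Finset.univ, u i = 0 :=
        (Finset.sum_eq_zero_iff_of_nonneg fun i _ => hu i).mp hseq.symm
      have hbK0 : bK = 0 := by
        rw [hbKeq]
        exact Finset.sum_eq_zero fun i hi => by rw [this i hi, zero_smul]
      rw [hbK0]
      exact subset_convexHull ℝ _ (Or.inl rfl)
    · set x := s⁻¹ • bK with hx
      have hxAc : x ∈ Ac := by
        rw [hAc]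
        have := Finset.centerMass_mem_convexHull (Finset.univ : Finset (Fin m))
          (fun i _ => hu i) (by rwa [← hs]) (fun i _ => Set.mem_range_self (f := a) i)
        rwa [Finset.centerMass, ← hs, ← hbKeq, ← hx] at this
      have hxnorm : dA ≤ ‖x‖ := hdA ▸ haco_min x hxAc
      have hbKx : bK = s • x := by
        rw [hx, smul_smul, mul_inv_cancel₀ hspos.ne', one_smul]
      have hnbK : ‖bK‖ = s * ‖x‖ := by
        rw [hbKx, norm_smul, Real.norm_eq_abs, abs_of_nonneg hs0]
      have hslt : s < ρ := by
        by_contra hc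
        push_neg at hc
        have h1 : ρ * dA ≤ s * dA := mul_le_mul_of_nonneg_right hc hdA_pos.le
        have h2 : s * dA ≤ s * ‖x‖ := mul_le_mul_of_nonneg_left hxnorm hs0
        linarith [hnbK ▸ hbK_le]
      have hρxT : ρ • x ∈ T := subset_convexHull ℝ _ (Or.inr (Set.smul_mem_smul_set hxAc))
      have h0T : (0 : E) ∈ T := subset_convexHull ℝ _ (Or.inl rfl)
      have := (convex_convexHull ℝ ({(0 : E)} ∪ ρ • Ac)) h0T hρxT
        (show (0:ℝ) ≤ 1 - s / ρ by rw [sub_nonneg]; exact (div_le_one hρpos).mpr hslt.le) (by positivity : (0:ℝ) ≤ s / ρ) (by ring)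
      rw [smul_zero, zero_add, smul_smul, div_mul_cancel₀ _ hρpos.ne'] at this
      rwa [hbKx]
  -- equality of distances
  have hbcoK : bco ∈ K := hTsubK hbco_mem
  have hle1 : ‖bK - b‖ ≤ ‖bco - b‖ := hbK_min _ hbcoK
  have hle2 : ‖bco - b‖ ≤ ‖bK - b‖ := hbco_min _ hbKT
  have heq : ‖bK - b‖ = ‖bco - b‖ := le_antisymm hle1 hle2
  -- uniqueness via parallelogram law
  have hmidT : (1/2 : ℝ) • bK + (1/2 : ℝ) • bco ∈ T :=
    (convex_convexHull ℝ ({(0 : E)} ∪ ρ • Ac)) hbKT hbco_mem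
      (by norm_num) (by norm_num) (by norm_num)
  have hmid : ‖bK - b‖ ≤ ‖(1/2 : ℝ) • bK + (1/2 : ℝ) • bco - b‖ := by
    rw [heq]
    exact hbco_min _ hmidT
  have hpar : ‖(bK - b) + (bco - b)‖ ^ 2 + ‖(bK - b) - (bco - b)‖ ^ 2
      = 2 * ‖bK - b‖ ^ 2 + 2 * ‖bco - b‖ ^ 2 := by
    rw [← real_inner_self_eq_norm_sq, ← real_inner_self_eq_norm_sq,
      ← real_inner_self_eq_norm_sq, ← real_inner_self_eq_norm_sq]
    simp only [inner_add_left, inner_add_right, inner_sub_left, inner_sub_right]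
    ring
  have hmid2 : (1/2 : ℝ) • bK + (1/2 : ℝ) • bco - b = (1/2 : ℝ) • ((bK - b) + (bco - b)) := by
    module
  have hmidnorm : ‖(1/2 : ℝ) • bK + (1/2 : ℝ) • bco - b‖ = (1/2) * ‖(bK - b) + (bco - b)‖ := by
    rw [hmid2, norm_smul]
    norm_num
  have hsum_ge : 2 * ‖bK - b‖ ≤ ‖(bK - b) + (bco - b)‖ := by
    rw [hmidnorm] at hmid
    linarith
  have hdiff : ‖(bK - b) - (bco - b)‖ ^ 2 ≤ 0 := by
    nlinarith [norm_nonneg ((bK - b) + (bco - b)), norm_nonneg (bK - b), heq]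
  have : bK - b - (bco - b) = 0 := by
    rw [← norm_le_zero_iff]
    nlinarith [norm_nonneg ((bK - b) - (bco - b))]
  have h := sub_eq_zero.mp this
  exact sub_left_injective h
end

section
/- Let E be a finite-dimensional real inner product space, let a^1,…,a^m ∈ E be a finite family of generators with convex hull A_c = co{a^1,…,a^m} and conical hull K(A) = {∑_{i=1}^m u_i a^i : u_i ≥ 0}. Let b ∈ E, ρ > 0, and suppose b^ρ ∈ ρA_c satisfies ‖b^ρ − b‖ ≤ ‖x − b‖ for all x ∈ ρA_c. Define Λ(x) = ⟨x − b^ρ, b^ρ − b⟩. If ‖b^ρ‖² > ⟨b, b^ρ⟩, then every x ∈ K(A) with Λ(x) ≤ 0 belongs to co({0} ∪ ρA_c); that is, K(A) ∩ {x : Λ(x) ≤ 0} ⊆ co({0} ∪ ρA_c). -/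
open scoped RealInnerProductSpace Pointwise

/-- The final step in the proof of Theorem 1: if the projection `bρ` of `b` onto the
scaled polytope `ρ • Ac` satisfies `‖bρ‖² > ⟪b, bρ⟫`, then the part of the cone `K(A)`
on which `Λ(x) = ⟪x - bρ, bρ - b⟫` is nonpositive is contained in the truncated cone
`co({0} ∪ ρ • Ac)`. -/
theorem cone_cap_subset_truncation
    {E : Type*} [NormedAddCommGroup E] [InnerProductSpace ℝ E] [FiniteDimensional ℝ E]
    {m : ℕ} (a : Fin m → E)
    (Ac : Set E) (hAc : Ac = convexHull ℝ (Set.range a))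
    (K : Set E)
    (hK : K = {x : E | ∃ u : Fin m → ℝ, (∀ i, 0 ≤ u i) ∧ x = ∑ i, u i • a i})
    (b : E) (ρ : ℝ) (hρ : 0 < ρ)
    (bρ : E) (hbρ_mem : bρ ∈ ρ • Ac)
    (hbρ_min : ∀ x ∈ ρ • Ac, ‖bρ - b‖ ≤ ‖x - b‖)
    (hcond : ‖bρ‖ ^ 2 > ⟪b, bρ⟫) :
    K ∩ {x : E | ⟪x - bρ, bρ - b⟫ ≤ 0} ⊆ convexHull ℝ ({(0 : E)} ∪ ρ • Ac) := by
  have hAcconv : Convex ℝ Ac := by rw [hAc]; exact convex_convexHull ℝ _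
  have hρAcconv : Convex ℝ (ρ • Ac) := hAcconv.smul ρ
  -- the infimum characterization of the projection
  haveI : Nonempty ↥(ρ • Ac) := ⟨⟨bρ, hbρ_mem⟩⟩
  have hinf : ‖b - bρ‖ = ⨅ w : ↥(ρ • Ac), ‖b - w‖ := by
    apply le_antisymm
    · apply le_ciInf
      intro w
      rw [norm_sub_rev, norm_sub_rev b]
      exact hbρ_min w w.2
    · have hbdd : BddBelow (Set.range fun w : ↥(ρ • Ac) => ‖b - (w : E)‖) :=
        ⟨0, by rintro r ⟨w, rfl⟩; exact norm_nonneg _⟩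
      exact ciInf_le hbdd ⟨bρ, hbρ_mem⟩
  have hVI : ∀ w ∈ ρ • Ac, 0 ≤ ⟪w - bρ, bρ - b⟫ := by
    intro w hw
    have := ((norm_eq_iInf_iff_real_inner_le_zero hρAcconv hbρ_mem).mp hinf) w hw
    have h2 : ⟪w - bρ, bρ - b⟫ = -⟪b - bρ, w - bρ⟫ := by
      rw [real_inner_comm, ← inner_neg_left, neg_sub]
    rw [h2]; linarith
  -- Λ(0) < 0
  have hΛ0 : ⟪(0 : E) - bρ, bρ - b⟫ < 0 := by
    have : ⟪(0 : E) - bρ, bρ - b⟫ = ⟪b, bρ⟫ - ‖bρ‖ ^ 2 := by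
      rw [zero_sub, inner_neg_left, inner_sub_right, real_inner_self_eq_norm_sq,
        real_inner_comm]
      ring
    rw [this]; linarith
  rintro x ⟨hxK, hxΛ⟩
  rw [hK] at hxK
  obtain ⟨u, hu0, hxu⟩ := hxK
  set s : ℝ := ∑ i, u i with hs
  have hs0 : 0 ≤ s := Finset.sum_nonneg fun i _ => hu0 i
  rcases eq_or_lt_of_le hs0 with hs0' | hspos
  · -- s = 0 → x = 0
    have : ∀ i ∈ Finset.univ, u i = 0 := by
      intro i _
      have h : u i ≤ s := Finset.single_le_sum (fun j _ => hu0 j) (Finset.mem_univ i)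
      have h0 : s = 0 := hs0'.symm
      linarith [hu0 i]
    have hx0 : x = 0 := by
      rw [hxu]
      exact Finset.sum_eq_zero fun i hi => by rw [this i hi, zero_smul]
    rw [hx0]
    exact subset_convexHull ℝ _ (Or.inl rfl)
  · -- s > 0
    set z : E := s⁻¹ • x with hz
    have hzAc : z ∈ Ac := by
      rw [hAc]
      have : z = Finset.univ.centerMass u a := by
        rw [Finset.centerMass, hz, hxu]
      rw [this]
      exact Finset.centerMass_mem_convexHull _ (fun i _ => hu0 i) hspos
        (fun i _ => Set.mem_range_self i)
    have hxz : x = s • z := by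
      rw [hz, smul_smul, mul_inv_cancel₀ (ne_of_gt hspos), one_smul]
    -- claim s ≤ ρ
    have hsρ : s ≤ ρ := by
      by_contra hgt
      push_neg at hgt
      set t : ℝ := ρ / s with ht
      have ht0 : 0 < t := div_pos hρ hspos
      have ht1 : t < 1 := (div_lt_one hspos).mpr hgt
      have hy : t • x ∈ ρ • Ac := by
        have : t • x = ρ • z := by
          rw [hxz, smul_smul, ht, div_mul_cancel₀ _ (ne_of_gt hspos)]
        rw [this]
        exact Set.smul_mem_smul_set hzAc
      have hVIy := hVI _ hy
      have hsplit : ⟪t • x - bρ, bρ - b⟫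
          = t * ⟪x - bρ, bρ - b⟫ + (1 - t) * ⟪(0 : E) - bρ, bρ - b⟫ := by
        rw [inner_sub_left, inner_sub_left, inner_sub_left, real_inner_smul_left,
          inner_zero_left]
        ring
      simp only [Set.mem_setOf_eq] at hxΛ
      nlinarith [mul_nonneg ht0.le (neg_nonneg.2 hxΛ), mul_pos (sub_pos.2 ht1) (neg_pos.2 hΛ0)]
    -- x = (s/ρ) • (ρ • z) + (1 - s/ρ) • 0
    have hconvset := convex_convexHull ℝ ({(0 : E)} ∪ ρ • Ac)
    have h0mem : (0 : E) ∈ convexHull ℝ ({(0 : E)} ∪ ρ • Ac) :=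
      subset_convexHull ℝ _ (Or.inl rfl)
    have hρz : ρ • z ∈ convexHull ℝ ({(0 : E)} ∪ ρ • Ac) :=
      subset_convexHull ℝ _ (Or.inr (Set.smul_mem_smul_set hzAc))
    have hcomb := hconvset hρz h0mem (div_nonneg hs0 hρ.le)
      (by rw [sub_nonneg]; exact (div_le_one hρ).mpr hsρ) (by ring : s / ρ + (1 - s / ρ) = 1)
    have : (s / ρ) • (ρ • z) + (1 - s / ρ) • (0 : E) = x := by
      rw [smul_zero, add_zero, smul_smul, div_mul_cancel₀ _ (ne_of_gt hρ), hxz]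
    rwa [this] at hcomb
end

section
/- Let E be a finite-dimensional real inner product space, let a^1,…,a^m ∈ E be a finite family of generators with convex hull A_c = co{a^1,…,a^m} and conical hull K(A) = {∑_{i=1}^m u_i a^i : u_i ≥ 0}, and assume 0 ∉ A_c. Let a^{co} ∈ A_c satisfy ‖a^{co}‖ ≤ ‖x‖ for all x ∈ A_c and set d_A = ‖a^{co}‖. Let b ∈ E, let ρ > ‖b‖/d_A, and suppose b^K ∈ K(A) satisfies ‖b^K − b‖ ≤ ‖x − b‖ for all x ∈ K(A). Then b^K ∈ co({0} ∪ ρA_c), i.e. b^K = t·y for some t ∈ [0, ρ] and y ∈ A_c ∪ {0}. -/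
open scoped RealInnerProductSpace Pointwise

/-- The crux of the second demonstration: when `ρ > ‖b‖ / d_A`, the projection `bK` of
`b` onto the cone `K(A)` already lies in the truncated cone `co({0} ∪ ρ • Ac)`, i.e.
`bK = t • y` for some `t ∈ [0, ρ]` and `y ∈ Ac ∪ {0}`. -/
theorem cone_projection_mem_truncation
    {E : Type*} [NormedAddCommGroup E] [InnerProductSpace ℝ E] [FiniteDimensional ℝ E]
    {m : ℕ} (a : Fin m → E)
    (Ac : Set E) (hAc : Ac = convexHull ℝ (Set.range a))
    (K : Set E)
    (hK : K = {x : E | ∃ u : Fin m → ℝ, (∀ i, 0 ≤ u i) ∧ x = ∑ i, u i • a i})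
    (hpointed : (0 : E) ∉ Ac)
    (aco : E) (haco_mem : aco ∈ Ac)
    (haco_min : ∀ x ∈ Ac, ‖aco‖ ≤ ‖x‖)
    (dA : ℝ) (hdA : dA = ‖aco‖)
    (b : E) (ρ : ℝ) (hρ : ρ > ‖b‖ / dA)
    (bK : E) (hbK_mem : bK ∈ K)
    (hbK_min : ∀ x ∈ K, ‖bK - b‖ ≤ ‖x - b‖) :
    bK ∈ convexHull ℝ ({(0 : E)} ∪ ρ • Ac) ∧
      ∃ t ∈ Set.Icc (0 : ℝ) ρ, ∃ y ∈ Ac ∪ {(0 : E)}, bK = t • y := by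
  subst hK hdA
  have haco0 : aco ≠ 0 := by rintro rfl; exact hpointed haco_mem
  have hd : (0:ℝ) < ‖aco‖ := norm_pos_iff.mpr haco0
  have hρ0 : 0 < ρ := lt_of_le_of_lt (by positivity) hρ
  obtain ⟨u, hu, hbKeq⟩ := hbK_mem
  -- the ray through bK lies in K
  have hray : ∀ t : ℝ, 0 ≤ t →
      (t • bK) ∈ {x : E | ∃ u : Fin m → ℝ, (∀ i, 0 ≤ u i) ∧ x = ∑ i, u i • a i} := by
    intro t ht
    exact ⟨fun i => t * u i, fun i => mul_nonneg ht (hu i), by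
      rw [hbKeq, Finset.smul_sum]; simp [smul_smul]⟩
  -- norm bound ‖bK‖ ≤ ‖b‖
  have hnorm : ‖bK‖ ≤ ‖b‖ := by
    rcases eq_or_ne bK 0 with h | h
    · simp [h]
    have hN : (0:ℝ) < ‖bK‖ := norm_pos_iff.mpr h
    have key : ∀ t : ℝ, 0 ≤ t →
        ‖bK‖^2 - 2*⟪bK, b⟫ ≤ t^2*‖bK‖^2 - 2*t*⟪bK, b⟫ := by
      intro t ht
      have h1 := hbK_min _ (hray t ht)
      have h2 : ‖bK - b‖^2 ≤ ‖t • bK - b‖^2 := by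
        have := norm_nonneg (bK - b)
        nlinarith
      rw [norm_sub_sq_real, norm_sub_sq_real, norm_smul, real_inner_smul_left,
        Real.norm_eq_abs, abs_of_nonneg ht] at h2
      nlinarith
    have hI : ‖bK‖^2 ≤ 2*⟪bK, b⟫ := by
      have := key 0 le_rfl; nlinarith
    have hI0 : 0 ≤ ⟪bK, b⟫ := by nlinarith
    have ht := key (⟪bK, b⟫ / ‖bK‖^2) (by positivity)
    have heq : ‖bK‖^2 ≤ ⟪bK, b⟫ := by
      have hN2 : (0:ℝ) < ‖bK‖^2 := by positivity
      have h3 : (⟪bK, b⟫ / ‖bK‖^2)^2 * ‖bK‖^2 = ⟪bK, b⟫^2 / ‖bK‖^2 := by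
        field_simp
      have h4 : (⟪bK, b⟫ / ‖bK‖^2) * ⟪bK, b⟫ = ⟪bK, b⟫^2 / ‖bK‖^2 := by
        field_simp
      rw [h3] at ht
      nlinarith [sq_nonneg (‖bK‖^2 - ⟪bK, b⟫), mul_pos hN2 hN2,
        (div_le_iff₀ hN2).mp (le_of_eq h4.symm)]
    have hCS := real_inner_le_norm bK b
    nlinarith
  set s := ∑ i, u i with hsdef
  have hs0 : 0 ≤ s := Finset.sum_nonneg fun i _ => hu i
  rcases eq_or_lt_of_le hs0 with hs | hs
  · -- all coefficients vanish, bK = 0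
    have hz : ∀ i ∈ Finset.univ, u i = 0 :=
      (Finset.sum_eq_zero_iff_of_nonneg (fun i _ => hu i)).mp hs.symm
    have hbK0 : bK = 0 := by
      rw [hbKeq]
      exact Finset.sum_eq_zero fun i hi => by rw [hz i hi, zero_smul]
    refine ⟨?_, 0, ⟨le_rfl, hρ0.le⟩, 0, Or.inr rfl, by simp [hbK0]⟩
    rw [hbK0]
    exact subset_convexHull ℝ _ (Or.inl rfl)
  · set y := (Finset.univ : Finset (Fin m)).centerMass u a with hydef
    have hy : y ∈ Ac := by
      rw [hAc]
      exact Finset.centerMass_mem_convexHull _ (fun i _ => hu i) hs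
        (fun i _ => Set.mem_range_self i)
    have hbKy : bK = s • y := by
      rw [hydef, Finset.centerMass, smul_smul, mul_inv_cancel₀ hs.ne', one_smul, hbKeq]
    have hyn : ‖aco‖ ≤ ‖y‖ := haco_min y hy
    have hsn : s * ‖aco‖ ≤ ‖bK‖ := by
      rw [hbKy, norm_smul, Real.norm_eq_abs, abs_of_nonneg hs0]
      exact mul_le_mul_of_nonneg_left hyn hs0
    have hsρ : s ≤ ρ := by
      have : s ≤ ‖b‖ / ‖aco‖ := (le_div_iff₀ hd).mpr (hsn.trans hnorm)
      linarith
    refine ⟨?_, s, ⟨hs0, hsρ⟩, y, Or.inl hy, hbKy⟩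
    have h1 : ρ • y ∈ ({(0:E)} ∪ ρ • Ac) := Or.inr ⟨y, hy, rfl⟩
    have h0 : (0:E) ∈ ({(0:E)} ∪ ρ • Ac) := Or.inl rfl
    have hcomb := (convex_convexHull ℝ ({(0:E)} ∪ ρ • Ac))
      (subset_convexHull ℝ _ h1) (subset_convexHull ℝ _ h0)
      (show (0:ℝ) ≤ s/ρ from div_nonneg hs0 hρ0.le)
      (show (0:ℝ) ≤ 1 - s/ρ by
        have : s/ρ ≤ 1 := (div_le_one hρ0).mpr hsρ; linarith)
      (show s/ρ + (1 - s/ρ) = 1 by ring)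
    have : (s/ρ) • (ρ • y) + (1 - s/ρ) • (0:E) = s • y := by
      rw [smul_zero, add_zero, smul_smul, div_mul_cancel₀ _ hρ0.ne']
    rwa [this, ← hbKy] at hcomb
end
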